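/- Let I₁, I₂, I₃, l > 0, h ∈ ℝ, and set δ = I₁/I₂ − 1, γ = I₁/I₃ − 1, ρ = h/l, ρ̂ = ρ(1+δ). Let θ, ψ ∈ ℝ with cos θ ≠ 0, and let v = (v₁,v₂,v₃) ∈ ℝ³. Then the linear system l·(cos θ cos ψ, −cos θ sin ψ, sin θ)ᵀ − (0,h,0)ᵀ = diag(I₁,I₂,I₃)·M(θ,ψ)·(l/I₁)·v, where M(θ,ψ) has rows (cos θ cos ψ, sin ψ, 0), (−cos θ sin ψ, cos ψ, 0), (sin θ, 0, 1), holds if and only if v₁ = 1 + δ sin²ψ + ρ̂ sec θ sin ψ, v₂ = −δ cos θ cos ψ sin ψ − ρ̂ cos ψ, and v₃ = γ sin θ − δ sin θ sin²ψ − ρ̂ tan θ sin ψ. -/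

import Mathlib

open Real Matrix

/-- The matrix `M(θ, ψ)` relating the body angular velocity to the Euler angle rates. -/
noncomputable def Mmat (θ ψ : ℝ) : Matrix (Fin 3) (Fin 3) ℝ :=
  !![Real.cos θ * Real.cos ψ, Real.sin ψ, 0;
     -(Real.cos θ * Real.sin ψ), Real.cos ψ, 0;
     Real.sin θ, 0, 1]

set_option maxHeartbeats 1600000 in
theorem scaled_euler_equations_with_rotor
    (I₁ I₂ I₃ l h : ℝ) (hI₁ : 0 < I₁) (hI₂ : 0 < I₂) (hI₃ : 0 < I₃) (hl : 0 < l)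
    (δ γ ρ ρh : ℝ)
    (hδ : δ = I₁ / I₂ - 1) (hγ : γ = I₁ / I₃ - 1) (hρ : ρ = h / l) (hρh : ρh = ρ * (1 + δ))
    (θ ψ : ℝ) (hcos : Real.cos θ ≠ 0) (v : Fin 3 → ℝ) :
    (l • ![Real.cos θ * Real.cos ψ, -(Real.cos θ * Real.sin ψ), Real.sin θ]
        - ![0, h, 0]
      = (Matrix.diagonal ![I₁, I₂, I₃]).mulVec ((Mmat θ ψ).mulVec ((l / I₁) • v)))
    ↔ (v 0 = 1 + δ * Real.sin ψ ^ 2 + ρh * (Real.cos θ)⁻¹ * Real.sin ψ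
        ∧ v 1 = -δ * Real.cos θ * Real.cos ψ * Real.sin ψ - ρh * Real.cos ψ
        ∧ v 2 = γ * Real.sin θ - δ * Real.sin θ * Real.sin ψ ^ 2
            - ρh * Real.tan θ * Real.sin ψ) := by
  have hc2 : Real.sin ψ ^ 2 + Real.cos ψ ^ 2 = 1 := Real.sin_sq_add_cos_sq ψ
  rw [funext_iff, Fin.forall_fin_succ, Fin.forall_fin_succ, Fin.forall_fin_succ]
  simp [Mmat, Matrix.mulVec, Matrix.diagonal, Fin.sum_univ_three, dotProduct]
  subst hδ hγ hρ hρh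
  rw [Real.tan_eq_sin_div_cos]
  constructor
  · rintro ⟨e0, e1, e2⟩
    field_simp at e0 e1 e2
    have e1' : (-(l * (Real.cos θ * Real.sin ψ)) - h) * I₁
        = I₂ * (-(Real.cos θ * Real.sin ψ * (l * v 0)) + Real.cos ψ * (l * v 1)) := by
      apply mul_left_cancel₀ hI₁.ne'
      linear_combination I₁ * e1
    have hv0 : v 0 * (l * I₂ * Real.cos θ) =
        (I₂ + (I₁ - I₂) * Real.sin ψ ^ 2) * (l * Real.cos θ) + h * I₁ * Real.sin ψ := by
      linear_combination (-(I₂*Real.cos ψ*l))*e0 + (Real.sin ψ)*e1' - (I₂*l*Real.cos θ*(v 0 - 1))*hc2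
    have hv1 : v 1 * (I₂ * (l * I₂)) = (I₂ - I₁) * Real.cos θ * Real.cos ψ * Real.sin ψ * (l * I₂)
        - I₂ * (h * I₁ * Real.cos ψ) := by
      linear_combination (-(I₂^2*Real.sin ψ*l))*e0 - (I₂*Real.cos ψ)*e1' - (I₂^2*l*(v 1))*hc2
    have hv2 : v 2 * (I₃ * I₂ * (l * I₂ * Real.cos θ)) =
        ((I₁ - I₃) * Real.sin θ * I₂ - I₃ * ((I₁ - I₂) * Real.sin θ * Real.sin ψ ^ 2)) * (l * I₂ * Real.cos θ) -
          I₃ * I₂ * (h * I₁ * Real.sin θ * Real.sin ψ) := by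
      linear_combination (-(I₂^2*Real.cos θ*l))*e2 - (I₃*Real.sin θ*I₂)*hv0
    refine ⟨?_, ?_, ?_⟩ <;> field_simp
    · linear_combination hv0
    · apply mul_left_cancel₀ hI₂.ne'
      linear_combination hv1
    · apply mul_left_cancel₀ hI₂.ne'
      linear_combination hv2
  · rintro ⟨h0, h1, h2⟩
    rw [h0, h1, h2]
    refine ⟨?_, ?_, ?_⟩ <;> field_simp
    · ring_nf
    · linear_combination (l*Real.cos θ*Real.sin ψ*(I₁-I₂) + h*I₁) * hc2
    · ring_nf
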